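/- arXiv:1209.2966 — 3 statements merged into one kernel-verified Lean document; each statement's English description precedes it below -/
import Mathlib

section
/- Let B be a commutative unital real Banach algebra with norm φ, let d ≥ 1 be an integer, and let L : B → ℝ be a linear functional such that L(b^{2d}) ≥ 0 for all b ∈ B. Then L is continuous; in fact |L(a)| ≤ φ(a)·L(1) for all a ∈ B. -/
set_option maxHeartbeats 1000000

open Filter Topology

private lemma pow_strict {B : Type*} [NormedCommRing B] [NormedAlgebra ℝ B] (n : ℕ) :
    HasStrictFDerivAt (fun y : B => y ^ n) ((n : ℝ) • ContinuousLinearMap.id ℝ B) 1 := by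
  induction n with
  | zero =>
    convert hasStrictFDerivAt_const (𝕜 := ℝ) (1 : B) (1 : B) using 1
    · funext y; exact pow_zero y
    · ext z; simp
  | succ n ih =>
    have h := ih.mul (hasStrictFDerivAt_id (1 : B))
    simp only [id] at h
    have he : (fun y : B => y ^ n * y) = fun y : B => y ^ (n + 1) := by
      funext y; rw [pow_succ]
    rw [show ((fun y : B => y ^ n) * id) = fun y : B => y ^ n * y from rfl, he] at h
    refine h.congr_fderiv ?_
    ext z
    simp [add_smul, add_comm]

private lemma root_small {B : Type*} [NormedCommRing B] [NormedAlgebra ℝ B] [CompleteSpace B]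
    {n : ℕ} (hn : 1 ≤ n) :
    ∃ c : ℝ, 0 < c ∧ c < 1 ∧ ∀ u : B, ‖u - 1‖ ≤ c → ∃ y : B, y ^ n = u := by
  have hn' : ((n : ℝ)) ≠ 0 := by
    positivity
  let e : B ≃L[ℝ] B :=
    { toFun := fun x => (n : ℝ) • x
      invFun := fun x => (n : ℝ)⁻¹ • x
      map_add' := fun x y => smul_add _ x y
      map_smul' := fun c x => smul_comm _ c x
      left_inv := fun x => inv_smul_smul₀ hn' x
      right_inv := fun x => smul_inv_smul₀ hn' x
      continuous_toFun := continuous_const_smul _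
      continuous_invFun := continuous_const_smul _ }
  have hco : (e : B →L[ℝ] B) = (n : ℝ) • ContinuousLinearMap.id ℝ B := by
    ext z; rfl
  have hf : HasStrictFDerivAt (fun y : B => y ^ n) (e : B →L[ℝ] B) 1 := by
    rw [hco]; exact pow_strict n
  have hmap := hf.map_nhds_eq_of_equiv
  have hr : Set.range (fun y : B => y ^ n) ∈ 𝓝 (1 : B) := by
    have h1 : Set.range (fun y : B => y ^ n) ∈ Filter.map (fun y : B => y ^ n) (𝓝 (1 : B)) := by
      have := Filter.image_mem_map (m := fun y : B => y ^ n) (f := 𝓝 (1 : B)) (s := Set.univ) Filter.univ_mem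
      rwa [Set.image_univ] at this
    rwa [hmap, one_pow] at h1
  obtain ⟨ε, hε, hball⟩ := Metric.mem_nhds_iff.mp hr
  refine ⟨min (ε / 2) (1 / 2), by positivity, by
    calc min (ε / 2) (1 / 2) ≤ 1 / 2 := min_le_right _ _
    _ < 1 := by norm_num, fun u hu => ?_⟩
  have : u ∈ Metric.ball (1 : B) ε := by
    rw [Metric.mem_ball, dist_eq_norm]
    calc ‖u - 1‖ ≤ min (ε / 2) (1 / 2) := hu
    _ ≤ ε / 2 := min_le_left _ _
    _ < ε := by linarith
  exact hball this

private lemma root_ball {B : Type*} [NormedCommRing B] [NormedAlgebra ℝ B] [CompleteSpace B]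
    {n : ℕ} (hn : 1 ≤ n) (u : B) (hu : ‖u - 1‖ < 1) : ∃ y : B, y ^ n = u := by
  obtain ⟨c₀, hc0, hc01, hroot⟩ := root_small (B := B) hn
  set M : ℝ := max ‖(1 : B)‖ 1 with hMdef
  have hM1 : (1 : ℝ) ≤ M := le_max_right _ _
  set q : ℝ := 1 - c₀ / (M + 1) with hqdef
  have hq0 : 0 < q := by
    have : c₀ / (M + 1) < 1 := (div_lt_one (by linarith)).mpr (by linarith)
    simp only [hqdef]; linarith
  have hq1 : q < 1 := by
    have : 0 < c₀ / (M + 1) := by positivity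
    simp only [hqdef]; linarith
  have main : ∀ k : ℕ, ∀ u : B, ‖u - 1‖ ≤ 1 - (1 - c₀) * q ^ k → ∃ y : B, y ^ n = u := by
    intro k
    induction k with
    | zero => intro u hu; exact hroot u (by simpa using hu)
    | succ k ih =>
      intro u hu
      set c : ℝ := 1 - (1 - c₀) * q ^ k with hcdef
      have hqk1 : q ^ k ≤ 1 := pow_le_one₀ hq0.le hq1.le
      have hqk0 : 0 < q ^ k := pow_pos hq0 k
      have hcc0 : c₀ ≤ c := by nlinarith
      have hc1' : c < 1 := by nlinarith
      have hcpos : 0 < c := lt_of_lt_of_le hc0 hcc0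
      by_cases hs : ‖u - 1‖ ≤ c
      · exact ih u hs
      push_neg at hs
      set x : B := u - 1 with hxdef
      set s : ℝ := ‖x‖ with hsdef
      have hs0 : 0 < s := lt_trans hcpos hs
      set t : ℝ := c / s with htdef
      have ht0 : 0 < t := div_pos hcpos hs0
      have ht1 : t ≤ 1 := (div_le_one hs0).mpr hs.le
      have hts : t * s = c := div_mul_cancel₀ c hs0.ne'
      set w : B := -(t • x) with hwdef
      have hwn : ‖w‖ = c := by
        rw [hwdef, norm_neg, norm_smul, Real.norm_eq_abs, abs_of_pos ht0, ← hsdef, hts]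
      have hwlt : ‖w‖ < 1 := by rw [hwn]; exact hc1'
      set V : Bˣ := Units.oneSub w hwlt with hVdef
      have hVval : (V : B) = 1 + t • x := by
        simp [hVdef, Units.val_oneSub, hwdef, sub_neg_eq_add]
      obtain ⟨y₁, hy₁⟩ := ih (V : B) (by rw [hVval]; simpa [norm_smul, abs_of_pos ht0, ← hsdef] using hts.le)
      have hinvval : ((V⁻¹ : Bˣ) : B) = ∑' (i : ℕ), w ^ i := rfl
      have hinv : ‖((V⁻¹ : Bˣ) : B)‖ ≤ M - 1 + (1 - c)⁻¹ := by
        rw [hinvval]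
        refine (tsum_geometric_le_of_norm_lt_one w hwlt).trans ?_
        have h1M : ‖(1 : B)‖ ≤ M := le_max_left _ _
        rw [hwn]
        linarith
      set u' : B := u * ((V⁻¹ : Bˣ) : B) with hu'def
      have hdiff : u' - 1 = ((1 - t) • x) * ((V⁻¹ : Bˣ) : B) := by
        have h1 : (1 : B) = (V : B) * ((V⁻¹ : Bˣ) : B) := (Units.mul_inv V).symm
        calc u' - 1 = (u - (V : B)) * ((V⁻¹ : Bˣ) : B) := by
              rw [sub_mul, hu'def, ← h1]
        _ = ((1 - t) • x) * ((V⁻¹ : Bˣ) : B) := by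
              rw [hVval, sub_smul, one_smul]
              congr 1
              rw [hxdef]
              abel
      have hstep : s - c ≤ (1 - c) * (c₀ / (M + 1)) := by
        have hu2 : s ≤ 1 - (1 - c₀) * q ^ (k + 1) := hu
        have heq : (1 - (1 - c₀) * q ^ (k + 1)) - c = (1 - c) * (c₀ / (M + 1)) := by
          rw [hcdef, hqdef, pow_succ]; ring
        linarith
      have hnorm' : ‖u' - 1‖ ≤ c := by
        rw [hdiff]
        have h2 : ‖(1 - t) • x‖ = s - c := by
          rw [norm_smul, Real.norm_eq_abs, abs_of_nonneg (by linarith), ← hsdef]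
          nlinarith
        calc ‖((1 - t) • x) * ((V⁻¹ : Bˣ) : B)‖ ≤ ‖(1 - t) • x‖ * ‖((V⁻¹ : Bˣ) : B)‖ :=
              norm_mul_le _ _
        _ ≤ (s - c) * (M - 1 + (1 - c)⁻¹) := by
              rw [h2]
              exact mul_le_mul_of_nonneg_left hinv (by linarith)
        _ ≤ c := by
              have hD : (0 : ℝ) < 1 - c := by linarith
              have hDi : (1 - c) * (1 - c)⁻¹ = 1 := mul_inv_cancel₀ hD.ne'
              have hDi0 : 0 ≤ (1 - c)⁻¹ := by positivity
              have hr0 : 0 < c₀ / (M + 1) := by positivity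
              have hb : (s - c) * (M - 1 + (1 - c)⁻¹) ≤
                  (1 - c) * (c₀ / (M + 1)) * (M - 1 + (1 - c)⁻¹) :=
                mul_le_mul_of_nonneg_right hstep (by linarith)
              have hc2 : (1 - c) * (c₀ / (M + 1)) * (M - 1 + (1 - c)⁻¹) =
                  (c₀ / (M + 1)) * ((M - 1) * (1 - c) + (1 - c) * (1 - c)⁻¹) := by ring
              rw [hDi] at hc2
              have h3 : (M - 1) * (1 - c) + 1 ≤ M := by nlinarith
              have h4 : (c₀ / (M + 1)) * M ≤ c₀ := by
                rw [div_mul_eq_mul_div, div_le_iff₀ (by linarith : (0:ℝ) < M + 1)]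
                nlinarith
              have h5 : (c₀ / (M + 1)) * ((M - 1) * (1 - c) + 1) ≤ (c₀ / (M + 1)) * M :=
                mul_le_mul_of_nonneg_left h3 hr0.le
              linarith
      obtain ⟨y₂, hy₂⟩ := ih u' hnorm'
      refine ⟨y₁ * y₂, ?_⟩
      rw [mul_pow, hy₁, hy₂, hu'def]
      calc (V : B) * (u * ((V⁻¹ : Bˣ) : B)) = u * ((V : B) * ((V⁻¹ : Bˣ) : B)) := by ring
      _ = u := by rw [Units.mul_inv, mul_one]
  have h10 : (0 : ℝ) < 1 - ‖u - 1‖ := by linarith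
  have h1c : (0 : ℝ) < 1 - c₀ := by linarith
  obtain ⟨k, hk⟩ := exists_pow_lt_of_lt_one (div_pos h10 h1c) hq1
  refine main k u ?_
  rw [lt_div_iff₀ h1c] at hk
  nlinarith [pow_pos hq0 k]

/-- Automatic continuity: a linear functional on a commutative unital real Banach algebra
which is nonnegative on `2d`-th powers is continuous, and `|L a| ≤ ‖a‖ · L 1`. -/
theorem stmt4 {B : Type*} [NormedCommRing B] [NormedAlgebra ℝ B] [CompleteSpace B]
    (d : ℕ) (hd : 1 ≤ d) (L : B →ₗ[ℝ] ℝ) (hL : ∀ b : B, 0 ≤ L (b ^ (2 * d))) :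
    Continuous L ∧ ∀ a : B, |L a| ≤ ‖a‖ * L 1 := by
  have hL1 : 0 ≤ L 1 := by simpa using hL 1
  have key : ∀ a : B, ∀ t : ℝ, ‖a‖ < t → 0 ≤ t * L 1 + L a := by
    intro a t ht
    have ht0 : 0 < t := lt_of_le_of_lt (norm_nonneg a) ht
    have hu : ‖(1 + t⁻¹ • a) - 1‖ < 1 := by
      rw [add_sub_cancel_left, norm_smul, Real.norm_eq_abs, abs_of_pos (inv_pos.mpr ht0)]
      rw [← div_eq_inv_mul, div_lt_one ht0]
      exact ht
    obtain ⟨y, hy⟩ := root_ball (n := 2 * d) (by omega) _ hu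
    set r : ℝ := t ^ (((2 * d : ℕ) : ℝ))⁻¹ with hrdef
    have hrpow : r ^ (2 * d) = t := Real.rpow_inv_natCast_pow ht0.le (by omega)
    have hb : (r • y) ^ (2 * d) = t • (1 : B) + a := by
      rw [smul_pow, hy, hrpow, smul_add, smul_smul, mul_inv_cancel₀ ht0.ne', one_smul]
    have h0 := hL (r • y)
    rw [hb, map_add, map_smul] at h0
    simpa using h0
  have key2 : ∀ a : B, 0 ≤ ‖a‖ * L 1 + L a := by
    intro a
    by_contra h
    push_neg at h
    set X : ℝ := ‖a‖ * L 1 + L a with hXdef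
    set ε : ℝ := -X / (L 1 + 1) with hεdef
    have hε : 0 < ε := div_pos (by linarith) (by linarith)
    have hkey := key a (‖a‖ + ε) (by linarith)
    have hεe : ε * (L 1 + 1) = -X := div_mul_cancel₀ (-X) (by linarith : L 1 + 1 ≠ 0)
    nlinarith
  have habs : ∀ a : B, |L a| ≤ ‖a‖ * L 1 := by
    intro a
    have h1 := key2 a
    have h2 := key2 (-a)
    rw [norm_neg, map_neg] at h2
    rw [abs_le]
    constructor <;> linarith
  refine ⟨?_, habs⟩
  exact (L.mkContinuous (L 1) fun a => by
    rw [Real.norm_eq_abs]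
    calc |L a| ≤ ‖a‖ * L 1 := habs a
    _ = L 1 * ‖a‖ := mul_comm _ _).continuous
end

section
/- Let B be a commutative unital real Banach algebra, d ≥ 1, and let S ⊆ B be a closed Σ B^{2d}-module of B (1 ∈ S, S+S ⊆ S, b^{2d}·S ⊆ S for all b ∈ B). Then S is archimedean: for every a ∈ B there is an integer n ≥ 1 with n + a ∈ S. In fact ‖a‖ + a ∈ S for all a ∈ B. -/
open NormedSpace Filter Topology

-- m-th roots exist in a neighborhood of 1
lemma roots_near_one {B : Type*} [NormedCommRing B] [NormedAlgebra ℝ B] [CompleteSpace B]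
    (m : ℕ) (hm : m ≠ 0) :
    ∃ ε > 0, ∀ x : B, ‖x - 1‖ < ε → ∃ b : B, b ^ m = x := by
  have hderiv : HasStrictFDerivAt (exp)
      ((ContinuousLinearEquiv.refl ℝ B : B →L[ℝ] B)) (0 : B) := by
    exact (hasStrictFDerivAt_exp_zero : HasStrictFDerivAt (exp) (1 : B →L[ℝ] B) 0)
  have hmap : Filter.map (exp) (𝓝 (0 : B)) = 𝓝 (exp (0 : B)) :=
    hderiv.map_nhds_eq_of_equiv
  have hrange : Set.range (exp : B → B) ∈ 𝓝 (1 : B) := by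
    rw [← NormedSpace.exp_zero (𝔸 := B), ← hmap]
    have : (exp : B → B) '' Set.univ ∈ Filter.map (exp : B → B) (𝓝 (0 : B)) :=
      Filter.image_mem_map Filter.univ_mem
    rwa [Set.image_univ] at this
  obtain ⟨ε, hε, hball⟩ := Metric.mem_nhds_iff.1 hrange
  refine ⟨ε, hε, fun x hx => ?_⟩
  have : x ∈ Set.range (exp : B → B) := hball (by simpa [dist_eq_norm] using hx)
  obtain ⟨z, hz⟩ := this
  refine ⟨exp ((m : ℝ)⁻¹ • z), ?_⟩
  let +nondep : NormedAlgebra ℚ B := .restrictScalars ℚ ℝ B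
  rw [← NormedSpace.exp_nsmul, ← Nat.cast_smul_eq_nsmul ℝ, smul_smul,
    mul_inv_cancel₀ (by exact_mod_cast hm), one_smul, hz]

-- all of 1 + y, ‖y‖ < 1, are m-th powers
lemma root_one_add {B : Type*} [NormedCommRing B] [NormedAlgebra ℝ B] [CompleteSpace B]
    (m : ℕ) (hm : m ≠ 0) (y : B) (hy : ‖y‖ < 1) : ∃ b : B, b ^ m = 1 + y := by
  obtain ⟨ε, hε, hroot⟩ := roots_near_one (B := B) m hm
  set M : ℝ := ‖(1 : B)‖ + (1 - ‖y‖)⁻¹ + 1 with hM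
  have hM0 : 0 < M := by
    have : 0 < (1 - ‖y‖)⁻¹ := inv_pos.2 (by linarith)
    positivity
  obtain ⟨N, hN⟩ := exists_nat_gt (M * ‖y‖ / ε)
  have hN0 : 0 < (N : ℝ) := lt_of_le_of_lt (by positivity) hN
  have hNnat : 0 < N := by exact_mod_cast hN0
  have key : ∀ k : ℕ, k ≤ N → ∃ b : B, b ^ m = 1 + ((k : ℝ) / N) • y := by
    intro k
    induction k with
    | zero => intro _; exact ⟨1, by simp⟩
    | succ k ih =>
      intro hk
      obtain ⟨b, hb⟩ := ih (le_of_lt (Nat.lt_of_succ_le hk))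
      -- the unit 1 + (k/N) • y
      have hknorm : ‖-(((k : ℝ) / N) • y)‖ ≤ ‖y‖ := by
        rw [norm_neg, norm_smul]
        have h1 : (k : ℝ) / N ≤ 1 := by
          rw [div_le_one hN0]
          exact_mod_cast le_of_lt (Nat.lt_of_succ_le hk)
        have h0 : (0:ℝ) ≤ (k : ℝ) / N := by positivity
        calc ‖((k : ℝ) / N)‖ * ‖y‖ ≤ 1 * ‖y‖ := by
              apply mul_le_mul_of_nonneg_right _ (norm_nonneg y)
              rwa [Real.norm_eq_abs, abs_of_nonneg h0]
          _ = ‖y‖ := one_mul _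
      have hklt : ‖-(((k : ℝ) / N) • y)‖ < 1 := lt_of_le_of_lt hknorm hy
      set u : Bˣ := Units.oneSub (-(((k : ℝ) / N) • y)) hklt with hu
      have huval : (u : B) = 1 + ((k : ℝ) / N) • y := by
        simp [hu, sub_neg_eq_add]
      have huinv : ((u⁻¹ : Bˣ) : B) = ∑' n : ℕ, (-(((k : ℝ) / N) • y)) ^ n := rfl
      have hinvnorm : ‖((u⁻¹ : Bˣ) : B)‖ ≤ M := by
        rw [huinv]
        refine le_trans (tsum_geometric_le_of_norm_lt_one _ hklt) ?_
        have : (1 - ‖-(((k : ℝ) / N) • y)‖)⁻¹ ≤ (1 - ‖y‖)⁻¹ := by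
          apply inv_anti₀ (by linarith) (by linarith)
        rw [hM]; linarith
      -- v := 1 + (1/N) • (u⁻¹ * y)
      set v : B := 1 + ((1 : ℝ) / N) • (((u⁻¹ : Bˣ) : B) * y) with hv
      have hvnear : ‖v - 1‖ < ε := by
        rw [hv, add_sub_cancel_left, norm_smul]
        have h1 : ‖((u⁻¹ : Bˣ) : B) * y‖ ≤ M * ‖y‖ :=
          le_trans (norm_mul_le _ _) (mul_le_mul_of_nonneg_right hinvnorm (norm_nonneg y))
        have h2 : ‖(1 : ℝ) / N‖ = 1 / N := by
          rw [Real.norm_eq_abs, abs_of_nonneg (by positivity)]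
        rw [h2]
        calc 1 / (N:ℝ) * ‖((u⁻¹ : Bˣ) : B) * y‖ ≤ 1 / N * (M * ‖y‖) := by
              apply mul_le_mul_of_nonneg_left h1 (by positivity)
          _ = M * ‖y‖ / N := by ring
          _ < ε := by
              rw [div_lt_iff₀ hN0]
              have h3 := (div_lt_iff₀ hε).1 hN
              nlinarith
      obtain ⟨c, hc⟩ := hroot v hvnear
      refine ⟨b * c, ?_⟩
      have huy : (u : B) * (((u⁻¹ : Bˣ) : B) * y) = y := by
        rw [← mul_assoc, Units.mul_inv, one_mul]
      have hmulv : ((u : B)) * v = 1 + (((k : ℝ) + 1) / N) • y := by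
        rw [hv, mul_add, mul_one, mul_smul_comm, huy, huval, add_assoc, ← add_smul, add_div]
      rw [mul_pow, hb, hc, ← huval, hmulv]
      push_cast
      ring_nf
  obtain ⟨b, hb⟩ := key N le_rfl
  refine ⟨b, ?_⟩
  rw [hb, div_self (ne_of_gt hN0), one_smul]

/-- A closed `Σ B^{2d}`-module of a commutative unital real Banach algebra is archimedean;
in fact `‖a‖ + a ∈ S` for all `a ∈ B`. -/
theorem stmt7 {B : Type*} [NormedCommRing B] [NormedAlgebra ℝ B] [CompleteSpace B]
    (d : ℕ) (hd : 1 ≤ d) (S : Set B) (hclosed : IsClosed S)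
    (h1 : (1 : B) ∈ S) (hadd : ∀ s ∈ S, ∀ t ∈ S, s + t ∈ S)
    (hmul : ∀ b : B, ∀ s ∈ S, b ^ (2 * d) * s ∈ S) :
    ∀ a : B, ‖a‖ • (1 : B) + a ∈ S ∧ ∃ n : ℕ, 1 ≤ n ∧ (n : B) + a ∈ S := by
  set m : ℕ := 2 * d with hmdef
  have hm : m ≠ 0 := by omega
  have powS : ∀ b : B, b ^ m ∈ S := fun b => by simpa using hmul b 1 h1
  -- nonneg scalar multiples of m-th powers are m-th powers
  have smul_pow : ∀ c : ℝ, 0 ≤ c → ∀ b : B, ∃ b' : B, b' ^ m = c • b ^ m := by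
    intro c hc b
    refine ⟨(c ^ ((m : ℝ)⁻¹)) • b, ?_⟩
    rw [smul_pow, Real.rpow_inv_natCast_pow hc hm]
  -- t • 1 + a ∈ S for t > ‖a‖
  have step : ∀ a : B, ∀ t : ℝ, ‖a‖ < t → t • (1 : B) + a ∈ S := by
    intro a t ht
    have ht0 : 0 < t := lt_of_le_of_lt (norm_nonneg a) ht
    have hy : ‖t⁻¹ • a‖ < 1 := by
      rw [norm_smul, Real.norm_eq_abs, abs_of_pos (inv_pos.2 ht0)]
      rw [inv_mul_lt_iff₀ ht0, mul_one]; exact ht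
    obtain ⟨b, hb⟩ := root_one_add m hm (t⁻¹ • a) hy
    obtain ⟨b', hb'⟩ := smul_pow t (le_of_lt ht0) b
    have : b' ^ m = t • (1:B) + a := by
      rw [hb', hb, smul_add, smul_smul, mul_inv_cancel₀ (ne_of_gt ht0), one_smul]
    rw [← this]; exact powS b'
  intro a
  have hmain : ‖a‖ • (1 : B) + a ∈ S := by
    have hseq : Tendsto (fun n : ℕ => (‖a‖ + 1 / (n + 1)) • (1 : B) + a) atTop
        (𝓝 (‖a‖ • (1 : B) + a)) := by
      have h0 : Tendsto (fun n : ℕ => ‖a‖ + 1 / ((n : ℝ) + 1)) atTop (𝓝 (‖a‖ + 0)) :=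
        tendsto_const_nhds.add tendsto_one_div_add_atTop_nhds_zero_nat
      rw [add_zero] at h0
      exact ((h0.smul_const (1 : B)).add tendsto_const_nhds)
    refine hclosed.mem_of_tendsto hseq (Filter.Eventually.of_forall fun n => ?_)
    exact step a _ (lt_add_of_pos_right _ (by positivity))
  refine ⟨hmain, ⟨⌈‖a‖⌉₊ + 1, le_add_self, ?_⟩⟩
  set n : ℕ := ⌈‖a‖⌉₊ + 1 with hn
  have hge : (0:ℝ) ≤ (n : ℝ) - ‖a‖ := by
    have h1 : ‖a‖ ≤ (⌈‖a‖⌉₊ : ℝ) := Nat.le_ceil _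
    have h2 : ((⌈‖a‖⌉₊ : ℕ) : ℝ) ≤ (n : ℝ) := by
      rw [hn]; push_cast; linarith
    linarith
  have hc1 : ((n : ℝ) - ‖a‖) • (1 : B) ∈ S := by
    obtain ⟨b', hb'⟩ := smul_pow ((n : ℝ) - ‖a‖) hge 1
    rw [one_pow] at hb'
    rw [← hb']; exact powS b'
  have := hadd _ hc1 _ hmain
  have heq : ((n : ℝ) - ‖a‖) • (1 : B) + (‖a‖ • (1 : B) + a) = (n : B) + a := by
    rw [← add_assoc, ← add_smul, sub_add_cancel]
    congr 1
    rw [Nat.cast_smul_eq_nsmul, nsmul_eq_mul, mul_one]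
  rwa [heq] at this
end

section
/- Let A be a commutative unital ℝ-algebra, ρ a submultiplicative seminorm on A, d ≥ 1 an integer, and S a Σ A^{2d}-module of A. Then the ρ-closure of S equals the set of all a ∈ A such that α(a) ≥ 0 for every ρ-continuous unital ℝ-algebra homomorphism α : A → ℝ that is nonnegative on S. -/
open Finset Filter

section Stmt8Aux

lemma stmt8_sub_id {R : Type*} [CommRing R] (c : R) (M : ℕ) : ∀ (n : ℕ),
    (1 - c) * ∑ k ∈ range (n+1), ((M+1+k).choose k : R) * c^k
      = (∑ k ∈ range (n+1), ((M+k).choose k : R) * c^k) - ((M+1+n).choose n : R) * c^(n+1) := by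
  intro n
  induction n with
  | zero => simp
  | succ n ih =>
    rw [sum_range_succ, mul_add, ih, sum_range_succ ((fun k => ((M+k).choose k : R) * c^k)) (n+1)]
    have pas : ((M+1+(n+1)).choose (n+1) : R)
        = ((M+n+1).choose n : R) + ((M+n+1).choose (n+1) : R) := by
      have h := Nat.choose_succ_succ (M+n+1) n
      rw [show M+1+(n+1) = (M+n+1)+1 by ring]
      exact_mod_cast congrArg (Nat.cast : ℕ → R) h
    rw [pas, show M+1+n = M+n+1 by ring]
    ring_nf
    rw [show (1:ℕ)+n = n+1 by ring]
    congr 1; exact sum_congr rfl fun _ _ => mul_comm _ _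

lemma stmt8_main_id {R : Type*} [CommRing R] (c : R) : ∀ (M n : ℕ),
    (1-c)^(M+1) * ∑ k ∈ range (n+1), ((M+k).choose k : R) * c^k
      = 1 - c^(n+1) * ∑ i ∈ range (M+1), (((i+n).choose n : R)) * (1-c)^i := by
  intro M
  induction M with
  | zero =>
    intro n
    have hg : (∑ i ∈ range (n+1), c ^ i) * (c - 1) = c^(n+1) - 1 := geom_sum_mul c (n+1)
    simp only [Nat.zero_add, Nat.choose_self, Nat.cast_one, one_mul, pow_one, zero_add,
      range_one, sum_singleton, pow_zero, mul_one]
    linear_combination (-1 : R) * hg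
  | succ M ih =>
    intro n
    have key : (1-c)^(M+1+1) * ∑ k ∈ range (n+1), ((M+1+k).choose k : R) * c^k
        = (1-c)^(M+1) * ((1-c) * ∑ k ∈ range (n+1), ((M+1+k).choose k : R) * c^k) := by ring
    rw [key, stmt8_sub_id c M n, mul_sub, ih n, sum_range_succ
      (fun i => (((i+n).choose n : R)) * (1-c)^i) (M+1)]
    rw [show M+1+n = M+n+1 by ring]
    ring

lemma stmt8_matrix_span {n : ℕ} (M : Matrix (Fin n) (Fin n) ℝ) (hM : IsUnit M.det)
    {A : Type*} [AddCommGroup A] [Module ℝ A] (w f : Fin n → A)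
    (hf : ∀ j, f j = ∑ k, M j k • w k) (k : Fin n) :
    w k = ∑ j, (M⁻¹ k j) • f j := by
  symm
  have h1 : ∑ j, (M⁻¹ k j) • f j = ∑ j, ∑ k', (M⁻¹ k j * M j k') • w k' := by
    apply Finset.sum_congr rfl
    intro j _
    rw [hf j, Finset.smul_sum]
    apply Finset.sum_congr rfl
    intro k' _
    rw [smul_smul]
  rw [h1, Finset.sum_comm]
  calc (∑ k', ∑ j, (M⁻¹ k j * M j k') • w k')
      = ∑ k', ((M⁻¹ * M) k k') • w k' := by
        apply Finset.sum_congr rfl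
        intro k' _
        rw [Matrix.mul_apply, Finset.sum_smul]
    _ = ∑ k', ((1 : Matrix (Fin n) (Fin n) ℝ) k k') • w k' := by rw [Matrix.nonsing_inv_mul M hM]
    _ = w k := by
        rw [Fintype.sum_eq_single k]
        · simp
        · intro k' hk'
          simp [Matrix.one_apply, (Ne.symm hk' : ¬ k = k')]

lemma stmt8_span_pow {A : Type*} [CommRing A] [Algebra ℝ A] {m : ℕ} (hm : 1 ≤ m) :
    Submodule.span ℝ {y : A | ∃ x, y = x ^ m} = ⊤ := by
  rw [eq_top_iff]
  rintro a -
  set P : Set A := {y : A | ∃ x, y = x ^ m} with hP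
  set v : Fin (m+1) → ℝ := fun j => (j : ℕ) with hv
  have hdet : IsUnit (Matrix.vandermonde v).det := by
    rw [Matrix.det_vandermonde, isUnit_iff_ne_zero, Finset.prod_ne_zero_iff]
    intro i _
    rw [Finset.prod_ne_zero_iff]
    intro j hj
    rw [Finset.mem_Ioi] at hj
    have : v i < v j := by
      simp only [hv]
      exact_mod_cast (Nat.cast_lt (α := ℝ)).2 (by exact_mod_cast hj)
    exact sub_ne_zero.2 (ne_of_gt this)
  set w : Fin (m+1) → A := fun j => (m.choose (j:ℕ) : ℝ) • a ^ (m - (j:ℕ)) with hw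
  set f : Fin (m+1) → A := fun i => ((v i) • (1:A) + a) ^ m with hf
  have hfw : ∀ i, f i = ∑ j, (Matrix.vandermonde v) i j • w j := by
    intro i
    show ((v i) • (1:A) + a) ^ m = _
    rw [add_pow]
    rw [← Fin.sum_univ_eq_sum_range (fun j => ((v i) • (1:A))^j * a^(m-j) * (m.choose j : A)) (m+1)]
    apply Finset.sum_congr rfl
    intro j _
    show ((v i) • (1:A))^(j:ℕ) * a^(m-(j:ℕ)) * ((m.choose (j:ℕ) : ℕ) : A)
        = (v i)^(j:ℕ) • ((m.choose (j:ℕ) : ℝ) • a ^ (m - (j:ℕ)))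
    rw [smul_pow, one_pow, smul_mul_assoc, one_mul, smul_mul_assoc]
    congr 1
    rw [Nat.cast_smul_eq_nsmul, nsmul_eq_mul, mul_comm]
  have hmem : ∀ j : Fin (m+1), w j ∈ Submodule.span ℝ P := by
    intro j
    rw [stmt8_matrix_span (Matrix.vandermonde v) hdet w f hfw j]
    apply Submodule.sum_mem
    intro i _
    apply Submodule.smul_mem
    apply Submodule.subset_span
    exact ⟨(v i) • (1:A) + a, rfl⟩
  have hj : ((⟨m-1, by omega⟩ : Fin (m+1)) : ℕ) = m - 1 := rfl
  have hwj := hmem ⟨m-1, by omega⟩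
  rw [hw] at hwj
  simp only [hj] at hwj
  have hch : (m.choose (m-1) : ℝ) = (m : ℝ) := by
    have h1 : m.choose (m-1) = m.choose 1 := by
      have := Nat.choose_symm (n := m) (k := 1) hm
      simpa using this
    rw [h1, Nat.choose_one_right]
  have hpow : m - (m - 1) = 1 := by omega
  rw [hch, hpow, pow_one] at hwj
  have h2 := Submodule.smul_mem _ ((m : ℝ))⁻¹ hwj
  rwa [smul_smul, inv_mul_cancel₀ (by positivity), one_smul] at h2

end Stmt8Aux

/-- The topology on `A` induced by a seminorm `ρ`. -/
noncomputable def Seminorm.mtopology {A : Type*} [AddCommGroup A] [Module ℝ A]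
    (ρ : Seminorm ℝ A) : TopologicalSpace A :=
  ρ.toSeminormedAddCommGroup.toUniformSpace.toTopologicalSpace

set_option maxHeartbeats 1000000 in
/-- The `ρ`-closure of a `Σ A^{2d}`-module `S` of `A` equals the set of elements `a` with
`α a ≥ 0` for every `ρ`-continuous unital ℝ-algebra homomorphism `α : A → ℝ` nonnegative
on `S`. -/
theorem stmt8 {A : Type*} [CommRing A] [Algebra ℝ A] (ρ : Seminorm ℝ A)
    (hsub : ∀ x y : A, ρ (x * y) ≤ ρ x * ρ y) (d : ℕ) (hd : 1 ≤ d)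
    (S : Set A) (h1 : (1 : A) ∈ S) (hadd : ∀ s ∈ S, ∀ t ∈ S, s + t ∈ S)
    (hmul : ∀ a : A, ∀ s ∈ S, a ^ (2 * d) * s ∈ S) :
    @closure A ρ.mtopology S =
      {a : A | ∀ α : A →ₐ[ℝ] ℝ, @Continuous A ℝ ρ.mtopology inferInstance ⇑α →
        (∀ s ∈ S, 0 ≤ α s) → 0 ≤ α a} := by
  obtain ⟨m', hm'⟩ : ∃ m', 2*d = m' + 2 := ⟨2*d - 2, by omega⟩
  rw [hm'] at hmul
  have hNeven : Even (m' + 2) := by rw [← hm']; exact ⟨d, by ring⟩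
  letI : SeminormedAddCommGroup A := ρ.toSeminormedAddCommGroup
  letI : NormedSpace ℝ A := ⟨fun r x => le_of_eq (map_smul_eq_mul ρ r x)⟩
  show closure S = {a : A | ∀ α : A →ₐ[ℝ] ℝ, Continuous ⇑α → (∀ s ∈ S, 0 ≤ α s) → 0 ≤ α a}
  have hdist : ∀ x y : A, dist x y = ρ (x - y) := fun _ _ => by rw [dist_eq_norm]; rfl
  have hmulc : ∀ c : A, Continuous fun x : A => c * x := by
    intro c
    refine LipschitzWith.continuous (K := ⟨ρ c, apply_nonneg ρ c⟩) (LipschitzWith.of_dist_le_mul ?_)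
    intro x y
    rw [hdist, hdist, ← mul_sub]
    exact hsub c (x - y)
  set C : Set A := closure S with hCdef
  have hSC : S ⊆ C := subset_closure
  have hCclosed : IsClosed C := isClosed_closure
  have hC1 : (1:A) ∈ C := hSC h1
  have hSsmul : ∀ t : ℝ, 0 ≤ t → ∀ s ∈ S, t • s ∈ S := by
    intro t ht s hs
    have h := hmul ((t ^ (((m'+2:ℕ)):ℝ)⁻¹) • 1) s hs
    rwa [smul_pow, one_pow, Real.rpow_inv_natCast_pow ht (by omega), smul_mul_assoc, one_mul] at h
  have hCadd : ∀ x ∈ C, ∀ y ∈ C, x + y ∈ C := by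
    intro x hx y hy
    exact map_mem_closure₂ continuous_add hx hy hadd
  have hCsmul : ∀ t : ℝ, 0 ≤ t → ∀ x ∈ C, t • x ∈ C := by
    intro t ht x hx
    exact map_mem_closure (continuous_const_smul t) hx (hSsmul t ht)
  have hCpow : ∀ (h : A), ∀ x ∈ C, h ^ (m'+2) * x ∈ C := by
    intro h x hx
    exact map_mem_closure (hmulc (h^(m'+2))) hx (fun s hs => hmul h s hs)
  have hC0 : (0:A) ∈ C := by
    have := hCsmul 0 le_rfl 1 hC1
    rwa [zero_smul] at this
  have hCconv : Convex ℝ C := by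
    refine Convex.closure ?_
    intro x hx y hy a b ha hb _
    exact hadd _ (hSsmul a ha x hx) _ (hSsmul b hb y hy)
  have hρpow : ∀ (x : A) (k : ℕ), ρ (x^(k+1)) ≤ ρ x ^ (k+1) := by
    intro x k
    induction k with
    | zero => simp
    | succ k ih =>
      calc ρ (x^(k+1+1)) = ρ (x * x^(k+1)) := by rw [← pow_succ']
        _ ≤ ρ x * ρ (x^(k+1)) := hsub _ _
        _ ≤ ρ x * ρ x ^ (k+1) := mul_le_mul_of_nonneg_left ih (apply_nonneg ρ x)
        _ = ρ x ^ (k+1+1) := by ring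
  -- helper for linearity
  have hlin0 : ∀ (Lf : A → ℝ), (∀ (r:ℝ) (x:A), Lf (r•x) = r * Lf x) → Lf 0 = 0 := by
    intro Lf hs
    have := hs 0 0
    simpa using this
  have hlinsub : ∀ (Lf : A → ℝ), (∀ x y, Lf (x+y) = Lf x + Lf y) →
      (∀ (r:ℝ) (x:A), Lf (r•x) = r * Lf x) → ∀ z w, Lf (z - w) = Lf z - Lf w := by
    intro Lf ha hs z w
    have hneg : Lf (-w) = - Lf w := by
      have := hs (-1) w
      rw [neg_smul, one_smul] at this
      rw [this]; ring
    rw [sub_eq_add_neg, ha, hneg, sub_eq_add_neg]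
  -- Lemma A
  have hA : ∀ (x s : A), s ∈ C → ρ (x^(m'+2)) < 1 → (1 - x^(m'+2)) * s ∈ C := by
    intro x s hs hxs
    set c : A := x ^ (m'+2) with hc
    have hr0 : (0:ℝ) ≤ ρ c := apply_nonneg ρ c
    have hr1 : ρ c < 1 := hxs
    have hterm : ∀ k : ℕ, (x^k * (1 - c))^(m'+2) * s = c^k * ((1-c)^(m'+2) * s) := by
      intro k
      calc (x^k * (1 - c))^(m'+2) * s = (x^k)^(m'+2) * (1-c)^(m'+2) * s := by rw [mul_pow]
        _ = x^(k*(m'+2)) * (1-c)^(m'+2) * s := by rw [← pow_mul]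
        _ = x^((m'+2)*k) * (1-c)^(m'+2) * s := by rw [Nat.mul_comm]
        _ = (x^(m'+2))^k * (1-c)^(m'+2) * s := by rw [pow_mul]
        _ = c^k * ((1-c)^(m'+2) * s) := by rw [← hc, mul_assoc]
    have humem : ∀ n : ℕ,
        (∑ k ∈ range (n+1), (((m'+k).choose k : ℝ)) • ((x^k * (1 - c))^(m'+2) * s)) ∈ C := by
      intro n
      have hone : ∀ k : ℕ, (((m'+k).choose k : ℝ)) • ((x^k * (1 - c))^(m'+2) * s) ∈ C :=
        fun k => hCsmul _ (by positivity) _ (hCpow _ _ hs)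
      induction n with
      | zero => rw [range_one, sum_singleton]; exact hone 0
      | succ n ih => rw [sum_range_succ]; exact hCadd _ ih _ (hone (n+1))
    have hun : ∀ n : ℕ,
        (∑ k ∈ range (n+1), (((m'+k).choose k : ℝ)) • ((x^k * (1 - c))^(m'+2) * s))
          = (1-c)*s - c^(n+1) *
            ((∑ i ∈ range (m'+1), ((i+n).choose n : A) * (1-c)^i) * ((1-c) * s)) := by
      intro n
      have hBid := stmt8_main_id (R := A) c m' n
      calc (∑ k ∈ range (n+1), (((m'+k).choose k : ℝ)) • ((x^k * (1 - c))^(m'+2) * s))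
          = ∑ k ∈ range (n+1), (((m'+k).choose k : A) * c^k) * ((1-c)^(m'+2) * s) := by
            apply sum_congr rfl
            intro k _
            rw [hterm k, Nat.cast_smul_eq_nsmul, nsmul_eq_mul]
            ring
        _ = (∑ k ∈ range (n+1), ((m'+k).choose k : A) * c^k) * ((1-c)^(m'+2) * s) := by
            rw [← sum_mul]
        _ = ((1-c)^(m'+1) * ∑ k ∈ range (n+1), ((m'+k).choose k : A) * c^k) * ((1-c) * s) := by
            ring
        _ = (1 - c^(n+1) * ∑ i ∈ range (m'+1), ((i+n).choose n : A) * (1-c)^i) * ((1-c) * s) := by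
            rw [hBid]
        _ = (1-c)*s - c^(n+1) *
            ((∑ i ∈ range (m'+1), ((i+n).choose n : A) * (1-c)^i) * ((1-c) * s)) := by
            ring
    -- bound the error term
    set K0 : ℝ := (∑ i ∈ range (m'+1), ρ ((1-c)^i)) * ρ ((1-c) * s) with hK0
    have hK0nn : 0 ≤ K0 := by
      apply mul_nonneg _ (apply_nonneg _ _)
      exact Finset.sum_nonneg fun i _ => apply_nonneg _ _
    have herr : ∀ n : ℕ, ρ (c^(n+1) *
        ((∑ i ∈ range (m'+1), ((i+n).choose n : A) * (1-c)^i) * ((1-c) * s)))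
          ≤ ρ c ^ (n+1) * ((((n+m'+2:ℕ)) : ℝ)^(m'+2) * K0) := by
      intro n
      have hGb : ρ (∑ i ∈ range (m'+1), ((i+n).choose n : A) * (1-c)^i)
          ≤ (((n+m'+2:ℕ)) : ℝ)^(m'+2) * (∑ i ∈ range (m'+1), ρ ((1-c)^i)) := by
        calc ρ (∑ i ∈ range (m'+1), ((i+n).choose n : A) * (1-c)^i)
            ≤ ∑ i ∈ range (m'+1), ρ (((i+n).choose n : A) * (1-c)^i) := by
              exact norm_sum_le (range (m'+1)) (fun i => (((i+n).choose n : ℕ) : A) * (1-c)^i)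
          _ ≤ ∑ i ∈ range (m'+1), (((n+m'+2:ℕ)) : ℝ)^(m'+2) * ρ ((1-c)^i) := by
              apply Finset.sum_le_sum
              intro i hi
              have hcast : (((i+n).choose n : ℕ) : A) * (1-c)^i
                  = (((i+n).choose n : ℕ) : ℝ) • (1-c)^i := by
                rw [Nat.cast_smul_eq_nsmul, nsmul_eq_mul]
              rw [hcast, map_smul_eq_mul]
              have hch : (((i+n).choose n : ℕ) : ℝ) ≤ (((n+m'+2:ℕ)) : ℝ)^(m'+2) := by
                have h1' : (i+n).choose n = (i+n).choose i := by
                  have := Nat.choose_symm (n := i+n) (k := i) (Nat.le_add_right i n)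
                  simpa using this
                have h2' : (i+n).choose i ≤ (i+n)^i := Nat.choose_le_pow _ _
                have h3' : (i+n)^i ≤ (n+m'+2)^(m'+2) := by
                  have hin : i + n ≤ n+m'+2 := by
                    have := Finset.mem_range.1 hi
                    omega
                  have him : i ≤ m'+2 := by
                    have := Finset.mem_range.1 hi
                    omega
                  calc (i+n)^i ≤ (n+m'+2)^i := Nat.pow_le_pow_left hin i
                    _ ≤ (n+m'+2)^(m'+2) := Nat.pow_le_pow_right (by omega) him
                have : (i+n).choose n ≤ (n+m'+2)^(m'+2) := by
                  rw [h1']; exact le_trans h2' h3'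
                calc (((i+n).choose n : ℕ) : ℝ) ≤ (((n+m'+2)^(m'+2) : ℕ) : ℝ) := by
                      exact_mod_cast this
                  _ = (((n+m'+2:ℕ)) : ℝ)^(m'+2) := by push_cast; ring
              rw [Real.norm_natCast]
              exact mul_le_mul_of_nonneg_right hch (apply_nonneg _ _)
          _ = (((n+m'+2:ℕ)) : ℝ)^(m'+2) * (∑ i ∈ range (m'+1), ρ ((1-c)^i)) := by
              rw [Finset.mul_sum]
      calc ρ (c^(n+1) * ((∑ i ∈ range (m'+1), ((i+n).choose n : A) * (1-c)^i) * ((1-c) * s)))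
          ≤ ρ (c^(n+1)) * ρ ((∑ i ∈ range (m'+1), ((i+n).choose n : A) * (1-c)^i) * ((1-c)*s)) :=
            hsub _ _
        _ ≤ ρ (c^(n+1)) * (ρ (∑ i ∈ range (m'+1), ((i+n).choose n : A) * (1-c)^i) * ρ ((1-c)*s)) := by
            apply mul_le_mul_of_nonneg_left (hsub _ _) (apply_nonneg _ _)
        _ ≤ ρ c ^ (n+1) * (((((n+m'+2:ℕ)) : ℝ)^(m'+2) * (∑ i ∈ range (m'+1), ρ ((1-c)^i))) * ρ ((1-c)*s)) := by
            have e1 : ρ (c^(n+1)) ≤ ρ c ^ (n+1) := hρpow c n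
            have e2 := mul_le_mul_of_nonneg_right hGb (apply_nonneg ρ ((1-c)*s))
            have e3 : (0:ℝ) ≤ ρ (∑ i ∈ range (m'+1), ((i+n).choose n : A) * (1-c)^i) * ρ ((1-c)*s) :=
              mul_nonneg (apply_nonneg _ _) (apply_nonneg _ _)
            exact mul_le_mul e1 e2 e3 (by positivity)
        _ = ρ c ^ (n+1) * ((((n+m'+2:ℕ)) : ℝ)^(m'+2) * K0) := by
            rw [hK0]; ring
    -- convergence
    have hlim : Tendsto (fun n : ℕ =>
        (∑ k ∈ range (n+1), (((m'+k).choose k : ℝ)) • ((x^k * (1 - c))^(m'+2) * s)))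
        atTop (nhds ((1-c)*s)) := by
      rw [tendsto_iff_dist_tendsto_zero]
      have hdeq : ∀ n : ℕ, dist
          (∑ k ∈ range (n+1), (((m'+k).choose k : ℝ)) • ((x^k * (1 - c))^(m'+2) * s)) ((1-c)*s)
          = ρ (c^(n+1) * ((∑ i ∈ range (m'+1), ((i+n).choose n : A) * (1-c)^i) * ((1-c) * s))) := by
        intro n
        rw [hdist, hun n]
        have he : (1-c)*s - c^(n+1) *
            ((∑ i ∈ range (m'+1), ((i+n).choose n : A) * (1-c)^i) * ((1-c) * s)) - (1-c)*s
            = -(c^(n+1) * ((∑ i ∈ range (m'+1), ((i+n).choose n : A) * (1-c)^i) * ((1-c) * s))) := by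
          ring
        rw [he, map_neg_eq_map]
      have hg : Tendsto (fun n : ℕ => ((m'+3:ℝ)^(m'+2) * K0) * ((n:ℝ)^(m'+2) * ρ c ^ n))
          atTop (nhds 0) := by
        have h0 := tendsto_pow_const_mul_const_pow_of_lt_one (m'+2) hr0 hr1
        have := h0.const_mul ((m'+3:ℝ)^(m'+2) * K0)
        simpa using this
      refine squeeze_zero' (Eventually.of_forall fun n => dist_nonneg) ?_ hg
      · filter_upwards [eventually_ge_atTop 1] with n hn
        rw [hdeq n]
        refine le_trans (herr n) ?_
        have hb1 : ((n+m'+2:ℕ) : ℝ)^(m'+2) ≤ (m'+3:ℝ)^(m'+2) * (n:ℝ)^(m'+2) := by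
          have hnat : (n+m'+2) ≤ n*(m'+3) := by
            have h2 : (m'+2) ≤ n*(m'+2) := Nat.le_mul_of_pos_left _ (by omega)
            calc n+m'+2 ≤ n + n*(m'+2) := by omega
              _ = n*(m'+3) := by ring
          calc ((n+m'+2:ℕ) : ℝ)^(m'+2) ≤ ((n*(m'+3) : ℕ) : ℝ)^(m'+2) := by
                apply pow_le_pow_left₀ (by positivity)
                exact_mod_cast hnat
            _ = (m'+3:ℝ)^(m'+2) * (n:ℝ)^(m'+2) := by
                rw [Nat.cast_mul, mul_pow]
                push_cast
                ring
        have hr2 : ρ c ^ (n+1) ≤ ρ c ^ n := by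
          calc ρ c ^ (n+1) = ρ c * ρ c ^ n := by ring
            _ ≤ 1 * ρ c ^ n := mul_le_mul_of_nonneg_right hr1.le (by positivity)
            _ = ρ c ^ n := one_mul _
        calc ρ c ^ (n+1) * ((((n+m'+2:ℕ)) : ℝ)^(m'+2) * K0)
            ≤ ρ c ^ n * ((((n+m'+2:ℕ)) : ℝ)^(m'+2) * K0) := by
              apply mul_le_mul_of_nonneg_right hr2 (by positivity)
          _ ≤ ρ c ^ n * (((m'+3:ℝ)^(m'+2) * (n:ℝ)^(m'+2)) * K0) := by
              apply mul_le_mul_of_nonneg_left _ (by positivity)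
              exact mul_le_mul_of_nonneg_right hb1 hK0nn
          _ = ((m'+3:ℝ)^(m'+2) * K0) * ((n:ℝ)^(m'+2) * ρ c ^ n) := by ring
    exact hCclosed.mem_of_tendsto hlim (Eventually.of_forall humem)
  -- key positivity/bound for linear functionals nonneg on C
  have hpowS : ∀ x : A, x^(m'+2) ∈ S := by
    intro x
    have := hmul x 1 h1
    rwa [mul_one] at this
  have hkey : ∀ (L : A → ℝ), (∀ x y, L (x+y) = L x + L y) →
      (∀ (r:ℝ) (x:A), L (r•x) = r * L x) → (∀ s ∈ C, 0 ≤ L s) →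
      ∀ (x : A), 0 ≤ L (x^(m'+2)) ∧ L (x^(m'+2)) ≤ ρ (x^(m'+2)) * L 1 := by
    intro L hLa hLs hLp x
    have hL1nn : 0 ≤ L 1 := hLp 1 hC1
    refine ⟨hLp _ (hSC (hpowS x)), ?_⟩
    have hstep : ∀ t : ℝ, 0 < t → t * ρ (x^(m'+2)) < 1 → t * L (x^(m'+2)) ≤ L 1 := by
      intro t ht htρ
      have htpow : ((t ^ (((m'+2:ℕ)):ℝ)⁻¹) • x) ^ (m'+2) = t • x^(m'+2) := by
        rw [smul_pow, Real.rpow_inv_natCast_pow ht.le (by omega)]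
      have hρt : ρ (((t ^ (((m'+2:ℕ)):ℝ)⁻¹) • x) ^ (m'+2)) < 1 := by
        rw [htpow, map_smul_eq_mul, Real.norm_eq_abs, abs_of_pos ht]
        exact htρ
      have hmem := hA _ 1 hC1 hρt
      rw [htpow, mul_one] at hmem
      have h0 := hLp _ hmem
      have hL1' : L (1 - t • x^(m'+2)) = L 1 - t * L (x^(m'+2)) := by
        rw [hlinsub L hLa hLs, hLs]
      rw [hL1'] at h0
      linarith
    refine le_of_forall_pos_le_add ?_
    intro ε hε
    set q : ℝ := ε / (L 1 + 1) with hq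
    have hqpos : 0 < q := by positivity
    have hqL : q * (L 1 + 1) = ε := div_mul_cancel₀ ε (by positivity)
    have ht2 : (0:ℝ) < ρ (x^(m'+2)) + q := by positivity
    have hstep2 := hstep (ρ (x^(m'+2)) + q)⁻¹ (by positivity) ?_
    · have h3 := mul_le_mul_of_nonneg_left hstep2 ht2.le
      rw [← mul_assoc, mul_inv_cancel₀ ht2.ne', one_mul] at h3
      have hqq : q * L 1 ≤ ε := by nlinarith
      nlinarith
    · rw [inv_mul_lt_iff₀ ht2, mul_one]
      linarith [apply_nonneg ρ (x^(m'+2))]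
  -- the span of (m'+2)-th powers is everything
  have hspan : Submodule.span ℝ {y : A | ∃ x, y = x ^ (m'+2)} = ⊤ := stmt8_span_pow (by omega)
  have hzero_ext : ∀ (L : A → ℝ), (∀ x y, L (x+y) = L x + L y) →
      (∀ (r:ℝ) (x:A), L (r•x) = r * L x) → (∀ x : A, L (x^(m'+2)) = 0) → ∀ b, L b = 0 := by
    intro L h1' h2' h3' b
    have hLlin : IsLinearMap ℝ L := ⟨h1', fun r x => by rw [h2' r x, smul_eq_mul]⟩
    have hle : Submodule.span ℝ {y : A | ∃ x, y = x^(m'+2)} ≤ LinearMap.ker (IsLinearMap.mk' L hLlin) := by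
      rw [Submodule.span_le]
      rintro p ⟨x, rfl⟩
      exact h3' x
    rw [hspan] at hle
    have hb : b ∈ LinearMap.ker (IsLinearMap.mk' L hLlin) := hle Submodule.mem_top
    simpa using hb
  -- the compact convex set of normalized positive functionals
  set T : Set (A → ℝ) := {L | (∀ x y, L (x+y) = L x + L y) ∧ (∀ (r:ℝ) (x:A), L (r • x) = r * L x)
      ∧ (∀ s ∈ C, 0 ≤ L s) ∧ L 1 ≤ 1} with hTdef
  have hbnd : ∀ b : A, ∃ Cb : ℝ, ∀ L ∈ T, |L b| ≤ Cb := by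
    intro b
    have hb : b ∈ Submodule.span ℝ {y : A | ∃ x, y = x^(m'+2)} := by
      rw [hspan]; exact Submodule.mem_top
    refine Submodule.span_induction (p := fun b _ => ∃ Cb : ℝ, ∀ L ∈ T, |L b| ≤ Cb)
      ?_ ?_ ?_ ?_ hb
    · rintro p ⟨x, rfl⟩
      refine ⟨ρ (x^(m'+2)), fun L hL => ?_⟩
      obtain ⟨hpn, hple⟩ := hkey L hL.1 hL.2.1 hL.2.2.1 x
      rw [abs_of_nonneg hpn]
      calc L (x^(m'+2)) ≤ ρ (x^(m'+2)) * L 1 := hple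
        _ ≤ ρ (x^(m'+2)) * 1 := mul_le_mul_of_nonneg_left hL.2.2.2 (apply_nonneg _ _)
        _ = ρ (x^(m'+2)) := mul_one _
    · exact ⟨0, fun L hL => by rw [hlin0 L hL.2.1]; simp⟩
    · rintro y z hy hz ⟨Cy, hCy⟩ ⟨Cz, hCz⟩
      refine ⟨Cy + Cz, fun L hL => ?_⟩
      rw [hL.1 y z]
      exact le_trans (abs_add_le _ _) (add_le_add (hCy L hL) (hCz L hL))
    · rintro r y hy ⟨Cy, hCy⟩
      refine ⟨|r| * Cy, fun L hL => ?_⟩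
      rw [hL.2.1 r y, abs_mul]
      exact mul_le_mul_of_nonneg_left (hCy L hL) (abs_nonneg r)
  choose Bnd hBnd using hbnd
  have hTsub : T ⊆ Set.pi Set.univ (fun b => Set.Icc (-(Bnd b)) (Bnd b)) := by
    intro L hL b _
    exact Set.mem_Icc.2 (abs_le.1 (hBnd b L hL))
  have hTclosed : IsClosed T := by
    have e1 : IsClosed {L : A → ℝ | ∀ x y, L (x+y) = L x + L y} := by
      have : {L : A → ℝ | ∀ x y, L (x+y) = L x + L y}
          = ⋂ (x) (y), {L : A → ℝ | L (x+y) = L x + L y} := by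
        ext L; simp [Set.mem_iInter]
      rw [this]
      exact isClosed_iInter fun x => isClosed_iInter fun y =>
        isClosed_eq (continuous_apply (x+y)) ((continuous_apply x).add (continuous_apply y))
    have e2 : IsClosed {L : A → ℝ | ∀ (r:ℝ) (x:A), L (r • x) = r * L x} := by
      have : {L : A → ℝ | ∀ (r:ℝ) (x:A), L (r • x) = r * L x}
          = ⋂ (r : ℝ) (x : A), {L : A → ℝ | L (r • x) = r * L x} := by
        ext L; simp [Set.mem_iInter]
      rw [this]
      exact isClosed_iInter fun r => isClosed_iInter fun x =>
        isClosed_eq (continuous_apply (r • x)) (continuous_const.mul (continuous_apply x))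
    have e3 : IsClosed {L : A → ℝ | ∀ s ∈ C, 0 ≤ L s} := by
      have : {L : A → ℝ | ∀ s ∈ C, 0 ≤ L s}
          = ⋂ (s : A) (_ : s ∈ C), {L : A → ℝ | 0 ≤ L s} := by
        ext L; simp [Set.mem_iInter]
      rw [this]
      exact isClosed_iInter fun s => isClosed_iInter fun _ =>
        isClosed_le continuous_const (continuous_apply _)
    have e4 : IsClosed {L : A → ℝ | L 1 ≤ 1} :=
      isClosed_le (continuous_apply _) continuous_const
    have : T = {L : A → ℝ | ∀ x y, L (x+y) = L x + L y}
        ∩ ({L : A → ℝ | ∀ (r:ℝ) (x:A), L (r • x) = r * L x}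
          ∩ ({L : A → ℝ | ∀ s ∈ C, 0 ≤ L s} ∩ {L : A → ℝ | L 1 ≤ 1})) := by
      ext L
      constructor
      · rintro ⟨a1, a2, a3, a4⟩; exact ⟨a1, a2, a3, a4⟩
      · rintro ⟨a1, a2, a3, a4⟩; exact ⟨a1, a2, a3, a4⟩
    rw [this]
    exact e1.inter (e2.inter (e3.inter e4))
  have hTcomp : IsCompact T :=
    IsCompact.of_isClosed_subset (isCompact_univ_pi fun b => isCompact_Icc) hTclosed hTsub
  have hTconv : Convex ℝ T := by
    rintro L1 hL1 L2 hL2 a b ha hb hab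
    refine ⟨fun x y => ?_, fun r x => ?_, fun s hs => ?_, ?_⟩
    · simp only [Pi.add_apply, Pi.smul_apply, smul_eq_mul]
      rw [hL1.1 x y, hL2.1 x y]; ring
    · simp only [Pi.add_apply, Pi.smul_apply, smul_eq_mul]
      rw [hL1.2.1 r x, hL2.2.1 r x]; ring
    · simp only [Pi.add_apply, Pi.smul_apply, smul_eq_mul]
      exact add_nonneg (mul_nonneg ha (hL1.2.2.1 s hs)) (mul_nonneg hb (hL2.2.2.1 s hs))
    · simp only [Pi.add_apply, Pi.smul_apply, smul_eq_mul]
      have b1 := hL1.2.2.2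
      have b2 := hL2.2.2.2
      nlinarith
  have h0T : (fun _ : A => (0:ℝ)) ∈ T := by
    refine ⟨fun x y => by ring, fun r x => by ring, fun s _ => le_rfl, by norm_num⟩
  -- extreme points of T with L 1 = 1 are multiplicative on powers
  have hmult : ∀ L ∈ Set.extremePoints ℝ T, L 1 = 1 →
      ∀ (x b : A), L (x^(m'+2) * b) = L (x^(m'+2)) * L b := by
    intro L hLex hL1 x b
    obtain ⟨hLT, hext⟩ := hLex
    obtain ⟨hLadd, hLsmul, hLpos, hL1le⟩ := hLT
    set t : ℝ := (1 + ρ (x^(m'+2)))⁻¹ with htdef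
    have htpos : 0 < t := by positivity
    set y : A := (t ^ (((m'+2:ℕ)):ℝ)⁻¹) • x with hydef
    have hyN : y^(m'+2) = t • x^(m'+2) := by
      rw [hydef, smul_pow, Real.rpow_inv_natCast_pow htpos.le (by omega)]
    have hρc : ρ (y^(m'+2)) < 1 := by
      rw [hyN, map_smul_eq_mul, Real.norm_eq_abs, abs_of_pos htpos, htdef]
      rw [inv_mul_lt_iff₀ (by positivity), mul_one]
      linarith [apply_nonneg ρ (x^(m'+2))]
    have hstep : L (y^(m'+2) * b) = L (y^(m'+2)) * L b := by
      set L1 : A → ℝ := fun z => L (y^(m'+2) * z) with hL1def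
      have hL1add : ∀ z w, L1 (z+w) = L1 z + L1 w := by
        intro z w
        simp only [hL1def]
        rw [mul_add, hLadd]
      have hL1smul : ∀ (r:ℝ) (z:A), L1 (r • z) = r * L1 z := by
        intro r z
        simp only [hL1def]
        rw [mul_smul_comm, hLsmul]
      have hL1pos : ∀ s ∈ C, 0 ≤ L1 s := by
        intro s hs
        exact hLpos _ (hCpow y s hs)
      have hL2pos : ∀ s ∈ C, 0 ≤ L s - L1 s := by
        intro s hs
        have hmem := hA y s hs hρc
        have h0 := hLpos _ hmem
        have he : (1 - y^(m'+2)) * s = s - y^(m'+2) * s := by ring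
        rw [he, hlinsub L hLadd hLsmul] at h0
        simpa [hL1def] using h0
      have hL11 : L1 1 = L (y^(m'+2)) := by
        simp only [hL1def]
        rw [mul_one]
      have hlam0 : 0 ≤ L (y^(m'+2)) := hLpos _ (hSC (hpowS y))
      have hlam1 : L (y^(m'+2)) ≤ 1 := by
        have h2 := hL2pos 1 hC1
        rw [hL11] at h2
        linarith
      by_cases hl0 : L (y^(m'+2)) = 0
      · have hz : ∀ x' : A, L1 (x'^(m'+2)) = 0 := by
          intro x'
          have hk := hkey L1 hL1add hL1smul hL1pos x'
          have := hk.2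
          rw [hL11, hl0, mul_zero] at this
          exact le_antisymm this hk.1
        have hall := hzero_ext L1 hL1add hL1smul hz b
        simp only [hL1def] at hall
        rw [hall, hl0, zero_mul]
      · by_cases hl1 : L (y^(m'+2)) = 1
        · have hL2add : ∀ z w, (L (z+w) - L1 (z+w)) = (L z - L1 z) + (L w - L1 w) := by
            intro z w
            rw [hLadd, hL1add]
            ring
          have hz : ∀ x' : A, (fun z => L z - L1 z) (x'^(m'+2)) = 0 := by
            intro x'
            have hk := hkey (fun z => L z - L1 z) (fun z w => by simpa using hL2add z w)
              (fun r z => by rw [hLsmul, hL1smul]; ring) hL2pos x'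
            have h1' : L 1 - L1 1 = 0 := by
              rw [hL11, hL1, hl1]
              ring
            have h2' := hk.2
            rw [h1', mul_zero] at h2'
            exact le_antisymm h2' hk.1
          have hall := hzero_ext (fun z => L z - L1 z)
            (fun z w => by simpa using hL2add z w)
            (fun r z => by rw [hLsmul, hL1smul]; ring) hz b
          simp only [hL1def] at hall
          rw [hl1, one_mul]
          linarith
        · set lam : ℝ := L (y^(m'+2)) with hlamdef
          have hlampos : 0 < lam := lt_of_le_of_ne hlam0 (Ne.symm hl0)
          have hlamlt : lam < 1 := lt_of_le_of_ne hlam1 hl1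
          have hlam1pos : 0 < 1 - lam := by linarith
          set M1 : A → ℝ := fun z => lam⁻¹ * L1 z with hM1def
          set M2 : A → ℝ := fun z => (1-lam)⁻¹ * (L z - L1 z) with hM2def
          have hM1T : M1 ∈ T := by
            refine ⟨fun z w => ?_, fun r z => ?_, fun s hs => ?_, ?_⟩
            · simp only [hM1def]; rw [hL1add]; ring
            · simp only [hM1def]; rw [hL1smul]; ring
            · exact mul_nonneg (inv_nonneg.2 hlampos.le) (hL1pos s hs)
            · have : M1 1 = 1 := by
                show lam⁻¹ * L1 1 = 1
                rw [hL11, inv_mul_cancel₀ hlampos.ne']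
              exact this.le
          have hM2T : M2 ∈ T := by
            refine ⟨fun z w => ?_, fun r z => ?_, fun s hs => ?_, ?_⟩
            · simp only [hM2def]; rw [hLadd, hL1add]; ring
            · simp only [hM2def]; rw [hLsmul, hL1smul]; ring
            · exact mul_nonneg (inv_nonneg.2 hlam1pos.le) (hL2pos s hs)
            · have : M2 1 = 1 := by
                show (1-lam)⁻¹ * (L 1 - L1 1) = 1
                rw [hL11, hL1]
                exact inv_mul_cancel₀ hlam1pos.ne'
              exact this.le
          have hseg : L ∈ openSegment ℝ M1 M2 := by
            refine ⟨lam, 1 - lam, hlampos, hlam1pos, by ring, ?_⟩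
            funext z
            simp only [Pi.add_apply, Pi.smul_apply, smul_eq_mul, hM1def, hM2def]
            field_simp
            ring
          have hM1L := (hext hM1T hM2T hseg)
          have : L1 b = lam * M1 b := by
            simp only [hM1def]
            rw [← mul_assoc, mul_inv_cancel₀ hlampos.ne', one_mul]
          rw [hM1L] at this
          simpa only [hL1def, hlamdef] using this
    have h2' : L (y^(m'+2) * b) = t * L (x^(m'+2) * b) := by
      rw [hyN, smul_mul_assoc, hLsmul]
    have h3' : L (y^(m'+2)) = t * L (x^(m'+2)) := by
      rw [hyN, hLsmul]
    rw [h2', h3', mul_assoc] at hstep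
    exact mul_left_cancel₀ htpos.ne' hstep
  -- nonzero extreme points are normalized
  have hLone : ∀ L ∈ Set.extremePoints ℝ T, (∃ b : A, L b ≠ 0) → L 1 = 1 := by
    rintro L hLex ⟨b0, hb0⟩
    obtain ⟨hLT, hext⟩ := hLex
    obtain ⟨hLadd, hLsmul, hLpos, hL1le⟩ := hLT
    have hL1nn : 0 ≤ L 1 := hLpos 1 hC1
    by_contra hne
    by_cases h0 : L 1 = 0
    · have hz : ∀ x' : A, L (x'^(m'+2)) = 0 := by
        intro x'
        have hk := hkey L hLadd hLsmul hLpos x'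
        have := hk.2
        rw [h0, mul_zero] at this
        exact le_antisymm this hk.1
      exact hb0 (hzero_ext L hLadd hLsmul hz b0)
    · have hL1pos' : 0 < L 1 := lt_of_le_of_ne hL1nn (Ne.symm h0)
      have hL1lt : L 1 < 1 := lt_of_le_of_ne hL1le hne
      set M1 : A → ℝ := fun z => (L 1)⁻¹ * L z with hM1def
      have hM1T : M1 ∈ T := by
        refine ⟨fun z w => ?_, fun r z => ?_, fun s hs => ?_, ?_⟩
        · simp only [hM1def]; rw [hLadd]; ring
        · simp only [hM1def]; rw [hLsmul]; ring
        · exact mul_nonneg (inv_nonneg.2 hL1nn) (hLpos s hs)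
        · have : M1 1 = 1 := by
            show (L 1)⁻¹ * L 1 = 1
            exact inv_mul_cancel₀ h0
          exact this.le
      have hseg : L ∈ openSegment ℝ M1 (fun _ => (0:ℝ)) := by
        refine ⟨L 1, 1 - L 1, hL1pos', by linarith, by ring, ?_⟩
        funext z
        simp only [Pi.add_apply, Pi.smul_apply, smul_eq_mul, hM1def]
        field_simp
        ring
      have hzeq := hext h0T hM1T (by rw [openSegment_symm]; exact hseg)
      exact hb0 (congrFun hzeq b0).symm
  -- final assembly
  apply Set.Subset.antisymm
  · intro a ha α hαc hαS
    have hsub' : closure S ⊆ {z : A | 0 ≤ α z} :=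
      closure_minimal (fun s hs => hαS s hs) (isClosed_le continuous_const hαc)
    exact hsub' ha
  · intro a haR
    by_contra haC
    obtain ⟨f, u, hfa, hfC⟩ := geometric_hahn_banach_point_closed hCconv hCclosed haC
    have hu0 : u < 0 := by
      have h00 := hfC 0 hC0
      rwa [ContinuousLinearMap.map_zero] at h00
    have hfpos : ∀ s ∈ C, 0 ≤ f s := by
      intro s hs
      by_contra hneg
      push_neg at hneg
      set t : ℝ := u / f s + 1 with htdef
      have htpos : 0 < t := by
        have hdp : 0 < u / f s := div_pos_of_neg_of_neg hu0 hneg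
        rw [htdef]
        linarith
      have hmem := hfC (t • s) (hCsmul t htpos.le s hs)
      rw [ContinuousLinearMap.map_smul, smul_eq_mul] at hmem
      have he : t * f s = u + f s := by
        rw [htdef, add_mul, div_mul_cancel₀ _ (ne_of_lt hneg), one_mul]
      rw [he] at hmem
      linarith
    have hfadd : ∀ z w : A, (⇑f) (z + w) = f z + f w := fun z w => ContinuousLinearMap.map_add f z w
    have hfsmul : ∀ (r : ℝ) (z : A), (⇑f) (r • z) = r * f z := by
      intro r z
      rw [ContinuousLinearMap.map_smul, smul_eq_mul]
    have hf1 : 0 < f 1 := by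
      rcases lt_or_eq_of_le (hfpos 1 hC1) with h | h
      · exact h
      · exfalso
        have hz : ∀ x' : A, f (x'^(m'+2)) = 0 := by
          intro x'
          have hk := hkey (⇑f) hfadd hfsmul hfpos x'
          have := hk.2
          rw [← h, mul_zero] at this
          exact le_antisymm this hk.1
        have hfa0 := hzero_ext (⇑f) hfadd hfsmul hz a
        rw [hfa0] at hfa
        linarith
    set L0 : A → ℝ := fun z => (f 1)⁻¹ * f z with hL0def
    have hL0T : L0 ∈ T := by
      refine ⟨fun z w => ?_, fun r z => ?_, fun s hs => ?_, ?_⟩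
      · simp only [hL0def]; rw [ContinuousLinearMap.map_add]; ring
      · simp only [hL0def]; rw [ContinuousLinearMap.map_smul, smul_eq_mul]; ring
      · exact mul_nonneg (inv_nonneg.2 hf1.le) (hfpos s hs)
      · simp only [hL0def]
        rw [inv_mul_cancel₀ hf1.ne']
    have hL0a : L0 a < 0 := by
      simp only [hL0def]
      exact mul_neg_of_pos_of_neg (inv_pos.2 hf1) (lt_trans hfa hu0)
    have hKM := closure_convexHull_extremePoints hTcomp hTconv
    have hexneg : ∃ L ∈ Set.extremePoints ℝ T, L a < 0 := by
      by_contra hno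
      push_neg at hno
      have hhalf : T ⊆ {g : A → ℝ | 0 ≤ g a} := by
        rw [← hKM]
        refine closure_minimal (convexHull_min ?_ ?_) ?_
        · exact fun g hg => hno g hg
        · exact convex_halfSpace_ge ⟨fun g h => rfl, fun r g => rfl⟩ 0
        · exact isClosed_le continuous_const (continuous_apply a)
      exact absurd (hhalf hL0T) (not_le.2 hL0a)
    obtain ⟨L, hLex, hLa⟩ := hexneg
    have hL1 : L 1 = 1 := hLone L hLex ⟨a, ne_of_lt hLa⟩
    obtain ⟨hLadd, hLsmul, hLpos, hL1le⟩ := hLex.1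
    have hmul_all : ∀ z w : A, L (z * w) = L z * L w := by
      intro z w
      have hzz := hzero_ext (fun zz => L (zz * w) - L zz * L w)
        (fun z1 z2 => by rw [add_mul, hLadd, hLadd]; ring)
        (fun r z1 => by rw [smul_mul_assoc, hLsmul, hLsmul]; ring)
        (fun x' => by rw [hmult L hLex hL1 x' w]; ring) z
      linarith
    have hL0' : L 0 = 0 := hlin0 L hLsmul
    let αr : A →+* ℝ := ⟨⟨⟨L, hL1⟩, hmul_all⟩, hL0', hLadd⟩
    let α : A →ₐ[ℝ] ℝ := AlgHom.mk' αr (fun r z => by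
      show L (r • z) = r • L z
      rw [hLsmul, smul_eq_mul])
    have hLbound : ∀ b : A, |L b| ≤ ρ b := by
      intro b
      have hkb := (hkey L hLadd hLsmul hLpos b).2
      rw [hL1, mul_one] at hkb
      have hpoweq : L (b^(m'+2)) = (L b)^(m'+2) := map_pow αr b (m'+2)
      have habs : |L b|^(m'+2) = (L b)^(m'+2) := hNeven.pow_abs (L b)
      have hρb : ρ (b^(m'+2)) ≤ (ρ b)^(m'+2) := hρpow b (m'+1)
      by_contra hcon
      push_neg at hcon
      have hlt : (ρ b)^(m'+2) < |L b|^(m'+2) :=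
        pow_lt_pow_left₀ hcon (apply_nonneg _ _) (by omega)
      rw [habs, ← hpoweq] at hlt
      linarith
    have hαcont : Continuous ⇑α := by
      refine LipschitzWith.continuous (K := 1) (LipschitzWith.of_dist_le_mul ?_)
      intro z w
      rw [NNReal.coe_one, one_mul, hdist z w, Real.dist_eq]
      have he : (α z) - (α w) = L (z - w) := (hlinsub L hLadd hLsmul z w).symm
      rw [he]
      exact hLbound _
    have hfinal := haR α hαcont (fun s hs => hLpos s (hSC hs))
    exact absurd hfinal (not_le.2 hLa)
end
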